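/- Let M = (S, A, r, P, γ) be a finite discounted MDP and π : S → A a policy such that the induced kernel P_π satisfies the (m,p)-Doeblin condition with m/p ≤ 1/(1−γ). Then ‖(I − γ P^π)^{-1} σ^π‖_∞ ≤ 80 √(m/p) / (1−γ), where σ^π ∈ ℝ^{S×A} is the vector with entries σ^π(s,a). -/

import Mathlib

open Finset in
lemma MDPaux.nonneg_of_sub {X : Type*} [Fintype X] [Nonempty X]
    (Q : Matrix X X ℝ) (hQ0 : ∀ x y, 0 ≤ Q x y) (hQ1 : ∀ x, ∑ y, Q x y = 1)
    {γ : ℝ} (hγ0 : 0 ≤ γ) (hγ1 : γ < 1) (z : X → ℝ)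
    (h : ∀ x, γ * (Q.mulVec z) x ≤ z x) : ∀ x, 0 ≤ z x := by
  obtain ⟨x₀, hx₀⟩ := Finite.exists_min z
  have hP : z x₀ ≤ (Q.mulVec z) x₀ := by
    calc z x₀ = ∑ y, Q x₀ y * z x₀ := by rw [← Finset.sum_mul, hQ1, one_mul]
    _ ≤ ∑ y, Q x₀ y * z y :=
      Finset.sum_le_sum (fun y _ => mul_le_mul_of_nonneg_left (hx₀ y) (hQ0 x₀ y))
    _ = (Q.mulVec z) x₀ := by simp [Matrix.mulVec, dotProduct]
  have h2 : γ * z x₀ ≤ z x₀ := le_trans (by nlinarith) (h x₀)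
  intro x
  exact le_trans (by nlinarith) (hx₀ x)

open Finset in
lemma MDPaux.pow_stoch {X : Type*} [Fintype X] [DecidableEq X]
    (Q : Matrix X X ℝ) (hQ0 : ∀ x y, 0 ≤ Q x y) (hQ1 : ∀ x, ∑ y, Q x y = 1) (t : ℕ) :
    (∀ x y, 0 ≤ (Q ^ t) x y) ∧ (∀ x, ∑ y, (Q ^ t) x y = 1) := by
  induction t with
  | zero =>
    constructor
    · intro x y; simp [Matrix.one_apply]; split <;> norm_num
    · intro x; simp [Matrix.one_apply]
  | succ t ih =>
    constructor
    · intro x y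
      rw [pow_succ, Matrix.mul_apply]
      exact Finset.sum_nonneg fun z _ => mul_nonneg (ih.1 x z) (hQ0 z y)
    · intro x
      simp only [pow_succ, Matrix.mul_apply]
      rw [Finset.sum_comm]
      calc ∑ z, ∑ y, (Q ^ t) x z * Q z y = ∑ z, (Q ^ t) x z * ∑ y, Q z y := by
            simp [Finset.mul_sum]
        _ = 1 := by simp only [hQ1, mul_one]; exact ih.2 x

lemma MDPaux.key_ineq (a b S0 γ : ℝ) (ha0 : 0 ≤ a) (haS : a ≤ S0)
    (hb1 : -1 ≤ b) (hb2 : b ≤ 1) (hγ : γ ≤ 1) :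
    γ * a ^ 2 - (a - b) ^ 2 ≤ 2 * S0 := by
  nlinarith [mul_nonneg ha0 (by linarith : (0:ℝ) ≤ 1 - b), sq_nonneg b,
    mul_nonneg (by linarith : (0:ℝ) ≤ 1 - γ) (sq_nonneg a)]

set_option maxHeartbeats 2000000 in
/-- `‖(I − γP^π)⁻¹ σ^π‖_∞ ≤ 80 √(m/p)/(1−γ)` when the kernel induced by `π`
is `(m,p)`-Doeblin with `m/p ≤ 1/(1−γ)`. -/
theorem inv_sigma_norm_le
    {S A : Type*} [Fintype S] [Nonempty S] [DecidableEq S]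
    [Fintype A] [Nonempty A] [DecidableEq A]
    -- the MDP data
    (r : S → A → ℝ) (hr0 : ∀ s a, 0 ≤ r s a) (hr1 : ∀ s a, r s a ≤ 1)
    (P : S → A → S → ℝ) (hP0 : ∀ s a s', 0 ≤ P s a s') (hP1 : ∀ s a, ∑ s', P s a s' = 1)
    (γ : ℝ) (hγ0 : 0 < γ) (hγ1 : γ < 1)
    -- the policy and its q-function (characterized by its Bellman equation)
    (π : S → A)
    (q : S → A → ℝ) (hq : ∀ s a, q s a = r s a + γ * ∑ s', P s a s' * q s' (π s'))
    -- the (m,p)-Doeblin condition for the induced kernel P_π, with m/p ≤ 1/(1-γ)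
    (m : ℕ) (p : ℝ) (hm : 0 < m) (hp0 : 0 < p) (hp1 : p ≤ 1)
    (ψ : S → ℝ) (hψ0 : ∀ s', 0 ≤ ψ s') (hψ1 : ∑ s', ψ s' = 1)
    (hdoeb : ∀ s s', p * ψ s' ≤ ((Matrix.of fun u u' => P u (π u) u') ^ m) s s')
    (hmp : (m : ℝ) / p ≤ 1 / (1 - γ))
    -- the operator P^π on ℝ^{S×A} and the standard-deviation vector σ^π
    (Pmat : Matrix (S × A) (S × A) ℝ)
    (hPmat : ∀ x y : S × A, Pmat x y = if y.2 = π y.1 then P x.1 x.2 y.1 else 0)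
    (σ : S × A → ℝ)
    (hσ : ∀ x : S × A, σ x =
      Real.sqrt (γ ^ 2 * (∑ s', P x.1 x.2 s' * (q s' (π s')) ^ 2 -
        (∑ s', P x.1 x.2 s' * q s' (π s')) ^ 2))) :
    (⨆ x : S × A, |((1 - γ • Pmat)⁻¹.mulVec σ) x|) ≤
      80 * Real.sqrt ((m : ℝ) / p) / (1 - γ) := by
  have hγd : (0:ℝ) < 1 - γ := by linarith
  -- Pmat basic properties
  have hPm0 : ∀ x y, 0 ≤ Pmat x y := by
    intro x y; rw [hPmat]; split
    · exact hP0 _ _ _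
    · exact le_refl 0
  have hPapp : ∀ (f : S × A → ℝ) (x : S × A),
      (Pmat.mulVec f) x = ∑ s', P x.1 x.2 s' * f (s', π s') := by
    intro f x
    simp only [Matrix.mulVec, dotProduct]
    rw [Fintype.sum_prod_type]
    refine Finset.sum_congr rfl fun s' _ => ?_
    simp [hPmat]
  have hPm1 : ∀ x : S × A, ∑ y, Pmat x y = 1 := by
    intro x
    have := hPapp (fun _ => 1) x
    simpa [Matrix.mulVec, dotProduct, hP1] using this
  -- the value function on states
  set v : S → ℝ := fun s => q s (π s) with hv
  set Q : Matrix S S ℝ := Matrix.of fun u u' => P u (π u) u' with hQdef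
  have hQ0 : ∀ s s', 0 ≤ Q s s' := fun s s' => hP0 _ _ _
  have hQ1 : ∀ s, ∑ s', Q s s' = 1 := fun s => hP1 s (π s)
  have hvB : ∀ s, v s = r s (π s) + γ * (Q.mulVec v) s := by
    intro s
    have := hq s (π s)
    exact this
  -- bounds on q
  obtain ⟨xm, hxm⟩ := Finite.exists_min (fun x : S × A => q x.1 x.2)
  obtain ⟨xM, hxM⟩ := Finite.exists_max (fun x : S × A => q x.1 x.2)
  set c : ℝ := q xm.1 xm.2 with hcdef
  have hconv : ∀ (x : S × A) (b : ℝ), (∀ s', v s' ≤ b) →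
      ∑ s', P x.1 x.2 s' * v s' ≤ b := by
    intro x b hb
    calc ∑ s', P x.1 x.2 s' * v s' ≤ ∑ s', P x.1 x.2 s' * b :=
          Finset.sum_le_sum fun s' _ => mul_le_mul_of_nonneg_left (hb s') (hP0 _ _ _)
      _ = b := by rw [← Finset.sum_mul, hP1, one_mul]
  have hconv' : ∀ (x : S × A) (b : ℝ), (∀ s', b ≤ v s') →
      b ≤ ∑ s', P x.1 x.2 s' * v s' := by
    intro x b hb
    calc b = ∑ s', P x.1 x.2 s' * b := by rw [← Finset.sum_mul, hP1, one_mul]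
      _ ≤ ∑ s', P x.1 x.2 s' * v s' :=
          Finset.sum_le_sum fun s' _ => mul_le_mul_of_nonneg_left (hb s') (hP0 _ _ _)
  have hc0 : 0 ≤ c := by
    have h1 : c ≤ ∑ s', P xm.1 xm.2 s' * v s' := hconv' xm c (fun s' => hxm (s', π s'))
    have h2 := hq xm.1 xm.2
    have h3 := hr0 xm.1 xm.2
    nlinarith
  have hcup : c ≤ 1 / (1 - γ) := by
    have h1 : ∑ s', P xM.1 xM.2 s' * v s' ≤ q xM.1 xM.2 :=
      hconv xM _ (fun s' => hxM (s', π s'))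
    have h2 := hq xM.1 xM.2
    have h3 := hr1 xM.1 xM.2
    have h4 : q xM.1 xM.2 ≤ 1 / (1 - γ) := by
      rw [le_div_iff₀ hγd]; nlinarith
    exact le_trans (hxm xM) h4
  -- span bound via Doeblin
  obtain ⟨sm, hsm⟩ := Finite.exists_min v
  obtain ⟨sM, hsM⟩ := Finite.exists_max v
  set rπ : S → ℝ := fun s => r s (π s) with hrπ
  have hiter : ∀ (k : ℕ) (s : S), v s =
      (∑ t ∈ Finset.range k, γ ^ t * ((Q ^ t).mulVec rπ) s) + γ ^ k * ((Q ^ k).mulVec v) s := by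
    intro k
    induction k with
    | zero => intro s; simp [Matrix.one_mulVec]
    | succ k ih =>
      intro s
      have hfun : v = rπ + γ • (Q.mulVec v) := by
        funext s'; have := hvB s'; simpa [Pi.add_apply, Pi.smul_apply, smul_eq_mul] using this
      have hstep : ∀ s', ((Q ^ k).mulVec v) s' =
          ((Q ^ k).mulVec rπ) s' + γ * ((Q ^ (k+1)).mulVec v) s' := by
        intro s'
        conv_lhs => rw [hfun]
        rw [Matrix.mulVec_add, Matrix.mulVec_smul]
        have : (Q ^ k).mulVec (Q.mulVec v) = (Q ^ (k+1)).mulVec v := by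
          rw [Matrix.mulVec_mulVec, ← pow_succ]
        rw [this]
        simp [Pi.add_apply, Pi.smul_apply, smul_eq_mul]
      rw [ih s, Finset.sum_range_succ, hstep s]
      ring
  have hg01 : ∀ (t : ℕ) (s : S), 0 ≤ ((Q ^ t).mulVec rπ) s ∧ ((Q ^ t).mulVec rπ) s ≤ 1 := by
    intro t s
    obtain ⟨hpow0, hpow1⟩ := MDPaux.pow_stoch Q hQ0 hQ1 t
    constructor
    · exact Finset.sum_nonneg fun s' _ => mul_nonneg (hpow0 s s') (hr0 _ _)
    · calc ((Q ^ t).mulVec rπ) s = ∑ s', (Q ^ t) s s' * rπ s' := rfl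
        _ ≤ ∑ s', (Q ^ t) s s' * 1 :=
            Finset.sum_le_sum fun s' _ => mul_le_mul_of_nonneg_left (hr1 _ _) (hpow0 s s')
        _ = 1 := by simp [hpow1 s]
  have hdoebbd : ((Q ^ m).mulVec v) sM - ((Q ^ m).mulVec v) sm ≤ (1 - p) * (v sM - v sm) := by
    obtain ⟨hpow0, hpow1⟩ := MDPaux.pow_stoch Q hQ0 hQ1 m
    have key : ∀ s : S, ((Q ^ m).mulVec v) s =
        (∑ s', ((Q ^ m) s s' - p * ψ s') * v s') + p * ∑ s', ψ s' * v s' := by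
      intro s
      simp only [Matrix.mulVec, dotProduct, Finset.mul_sum]
      rw [← Finset.sum_add_distrib]
      refine Finset.sum_congr rfl fun s' _ => ?_
      ring
    have hup : ∑ s', ((Q ^ m) sM s' - p * ψ s') * v s' ≤ (1 - p) * v sM := by
      calc ∑ s', ((Q ^ m) sM s' - p * ψ s') * v s'
          ≤ ∑ s', ((Q ^ m) sM s' - p * ψ s') * v sM :=
            Finset.sum_le_sum fun s' _ => mul_le_mul_of_nonneg_left (hsM s')
              (by have := hdoeb sM s'; linarith)
        _ = (1 - p) * v sM := by
            rw [← Finset.sum_mul, Finset.sum_sub_distrib, hpow1, ← Finset.mul_sum, hψ1, mul_one]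
    have hlo : (1 - p) * v sm ≤ ∑ s', ((Q ^ m) sm s' - p * ψ s') * v s' := by
      calc (1 - p) * v sm = ∑ s', ((Q ^ m) sm s' - p * ψ s') * v sm := by
            rw [← Finset.sum_mul, Finset.sum_sub_distrib, hpow1, ← Finset.mul_sum, hψ1, mul_one]
        _ ≤ ∑ s', ((Q ^ m) sm s' - p * ψ s') * v s' :=
            Finset.sum_le_sum fun s' _ => mul_le_mul_of_nonneg_left (hsm s')
              (by have := hdoeb sm s'; linarith)
    rw [key sM, key sm]
    linarith
  have hspan : v sM - v sm ≤ (m : ℝ) / p := by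
    have hγm0 : 0 < γ ^ m := pow_pos hγ0 m
    have hγm1 : γ ^ m ≤ 1 := pow_le_one₀ hγ0.le hγ1.le
    have hsp0 : 0 ≤ v sM - v sm := by have := hsm sM; linarith
    have h1 : v sM - v sm ≤ (m : ℝ) + (1 - p) * (v sM - v sm) := by
      have eM := hiter m sM
      have em := hiter m sm
      have hsum : (∑ t ∈ Finset.range m, γ ^ t * ((Q ^ t).mulVec rπ) sM) -
          (∑ t ∈ Finset.range m, γ ^ t * ((Q ^ t).mulVec rπ) sm) ≤ (m : ℝ) := by
        rw [← Finset.sum_sub_distrib]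
        calc ∑ t ∈ Finset.range m,
              (γ ^ t * ((Q ^ t).mulVec rπ) sM - γ ^ t * ((Q ^ t).mulVec rπ) sm)
            ≤ ∑ _t ∈ Finset.range m, (1 : ℝ) := by
              refine Finset.sum_le_sum fun t _ => ?_
              have h1 := hg01 t sM
              have h2 := hg01 t sm
              have hγt0 : 0 < γ ^ t := pow_pos hγ0 t
              have hγt1 : γ ^ t ≤ 1 := pow_le_one₀ hγ0.le hγ1.le
              nlinarith [h1.1, h1.2, h2.1, h2.2]
          _ = (m : ℝ) := by simp
      have htail : γ ^ m * (((Q ^ m).mulVec v) sM - ((Q ^ m).mulVec v) sm)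
          ≤ (1 - p) * (v sM - v sm) := by
        rcases le_or_gt 0 (((Q ^ m).mulVec v) sM - ((Q ^ m).mulVec v) sm) with h | h
        · nlinarith [hdoebbd]
        · nlinarith [mul_nonpos_of_nonneg_of_nonpos hγm0.le h.le]
      nlinarith [eM, em, hsum, htail]
    rw [le_div_iff₀ hp0]
    nlinarith
  -- the matrix B = 1 - γ•Pmat and its inverse
  set B : Matrix (S × A) (S × A) ℝ := 1 - γ • Pmat with hBdef
  have hBapp : ∀ (z : S × A → ℝ) (x : S × A),
      (B.mulVec z) x = z x - γ * (Pmat.mulVec z) x := by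
    intro z x
    rw [hBdef, Matrix.sub_mulVec, Matrix.smul_mulVec, Matrix.one_mulVec]
    simp [Pi.smul_apply, smul_eq_mul]
  have hnonneg : ∀ (z : S × A → ℝ), (∀ x, 0 ≤ (B.mulVec z) x) → ∀ x, 0 ≤ z x := by
    intro z hz
    refine MDPaux.nonneg_of_sub Pmat hPm0 hPm1 hγ0.le hγ1 z fun x => ?_
    have := hz x
    rw [hBapp] at this
    linarith
  have hBinj : Function.Injective B.mulVec := by
    intro z1 z2 h12
    have hz : B.mulVec (z1 - z2) = 0 := by rw [Matrix.mulVec_sub, h12, sub_self]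
    have h1 : ∀ x, 0 ≤ (z1 - z2) x :=
      hnonneg _ (fun x => by rw [hz]; exact le_refl 0)
    have h2 : ∀ x, 0 ≤ (z2 - z1) x := by
      refine hnonneg _ (fun x => ?_)
      have : B.mulVec (z2 - z1) = 0 := by rw [Matrix.mulVec_sub, h12, sub_self]
      rw [this]
      exact le_refl 0
    funext x
    have := h1 x
    have := h2 x
    simp only [Pi.sub_apply] at *
    linarith
  have hBunit : IsUnit B := Matrix.mulVec_injective_iff_isUnit.mp hBinj
  have hBdetu : IsUnit B.det := (Matrix.isUnit_iff_isUnit_det B).mp hBunit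
  have hBBinv : ∀ f : S × A → ℝ, B.mulVec (B⁻¹.mulVec f) = f := by
    intro f
    rw [Matrix.mulVec_mulVec, Matrix.mul_nonsing_inv B hBdetu, Matrix.one_mulVec]
  have hinvnn : ∀ (f : S × A → ℝ), (∀ x, 0 ≤ f x) → ∀ x, 0 ≤ (B⁻¹.mulVec f) x := by
    intro f hf
    exact hnonneg _ (fun x => by rw [hBBinv f]; exact hf x)
  have hD0 : ∀ x y, 0 ≤ B⁻¹ x y := by
    intro x y
    have h := hinvnn (Pi.single y 1) (fun z => by
      by_cases hzy : z = y <;> simp [Pi.single_apply, hzy]) x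
    simpa [Matrix.mulVec, dotProduct, Pi.single_apply] using h
  have hDrow : ∀ x, ∑ y, B⁻¹ x y = 1 / (1 - γ) := by
    intro x
    have hg : B.mulVec (fun _ => 1 / (1 - γ)) = fun _ => (1 : ℝ) := by
      funext z
      rw [hBapp]
      have : Pmat.mulVec (fun _ => 1 / (1 - γ)) z = 1 / (1 - γ) := by
        simp only [Matrix.mulVec, dotProduct, ← Finset.sum_mul, hPm1, one_mul]
      rw [this]
      field_simp
    have : B⁻¹.mulVec (fun _ => (1 : ℝ)) = fun _ => 1 / (1 - γ) := by
      rw [← hg, Matrix.mulVec_mulVec, Matrix.nonsing_inv_mul B hBdetu, Matrix.one_mulVec]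
    have := congrFun this x
    simpa [Matrix.mulVec, dotProduct] using this
  -- shifted q-function
  set qt : S × A → ℝ := fun x => q x.1 x.2 - c with hqtdef
  set rt : S × A → ℝ := fun x => r x.1 x.2 - (1 - γ) * c with hrtdef
  set S0 : ℝ := 1 + (m : ℝ) / p with hS0def
  set K : ℝ := 2 * S0 / (1 - γ) with hKdef
  have hmp1 : 1 ≤ (m : ℝ) / p := by
    rw [le_div_iff₀ hp0]
    have : (1 : ℝ) ≤ (m : ℝ) := by exact_mod_cast hm
    linarith
  have hS00 : 0 ≤ S0 := by positivity
  have hqt0 : ∀ x, 0 ≤ qt x := fun x => by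
    have := hxm x; simp only [hqtdef]; linarith
  have hqtS : ∀ x, qt x ≤ S0 := by
    intro x
    have h1 := hq x.1 x.2
    have h2 := hq xm.1 xm.2
    have h3 : ∑ s', P x.1 x.2 s' * v s' ≤ v sM := hconv x _ hsM
    have h4 : v sm ≤ ∑ s', P xm.1 xm.2 s' * v s' := hconv' xm _ hsm
    have h5 := hr1 x.1 x.2
    have h6 := hr0 xm.1 xm.2
    have hsp0 : 0 ≤ v sM - v sm := by have := hsm sM; linarith
    have h7 : γ * (∑ s', P x.1 x.2 s' * v s') - γ * (∑ s', P xm.1 xm.2 s' * v s')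
        ≤ γ * (v sM - v sm) := by
      have : (∑ s', P x.1 x.2 s' * v s') - (∑ s', P xm.1 xm.2 s' * v s') ≤ v sM - v sm := by
        linarith
      calc γ * (∑ s', P x.1 x.2 s' * v s') - γ * (∑ s', P xm.1 xm.2 s' * v s')
          = γ * ((∑ s', P x.1 x.2 s' * v s') - (∑ s', P xm.1 xm.2 s' * v s')) := by ring
        _ ≤ γ * (v sM - v sm) := mul_le_mul_of_nonneg_left this hγ0.le
    have h8 : γ * (v sM - v sm) ≤ v sM - v sm := by
      calc γ * (v sM - v sm) ≤ 1 * (v sM - v sm) := mul_le_mul_of_nonneg_right hγ1.le hsp0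
        _ = v sM - v sm := one_mul _
    simp only [hqtdef, hS0def]
    linarith
  have hrt1 : ∀ x, -1 ≤ rt x ∧ rt x ≤ 1 := by
    intro x
    have h1 := hr0 x.1 x.2
    have h2 := hr1 x.1 x.2
    have h3 : (1 - γ) * c ≤ 1 := by
      have := (le_div_iff₀ hγd).mp hcup
      linarith
    have h4 : 0 ≤ (1 - γ) * c := mul_nonneg hγd.le hc0
    constructor <;> (simp only [hrtdef]; linarith)
  have hPqt : ∀ x, (Pmat.mulVec qt) x = (∑ s', P x.1 x.2 s' * v s') - c := by
    intro x
    rw [hPapp]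
    have e : ∀ s' ∈ Finset.univ, P x.1 x.2 s' * qt (s', π s')
        = P x.1 x.2 s' * v s' - P x.1 x.2 s' * c := by
      intro s' _; simp only [hqtdef]; ring
    rw [Finset.sum_congr rfl e, Finset.sum_sub_distrib, ← Finset.sum_mul, hP1, one_mul]
  have hPqt2 : ∀ x, (Pmat.mulVec (fun y => qt y ^ 2)) x
      = ∑ s', P x.1 x.2 s' * (v s' - c) ^ 2 := by
    intro x
    rw [hPapp]
  have hqtB : ∀ x, γ * (Pmat.mulVec qt) x = qt x - rt x := by
    intro x
    rw [hPqt x]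
    have h1 : q x.1 x.2 = r x.1 x.2 + γ * ∑ s', P x.1 x.2 s' * v s' := hq x.1 x.2
    simp only [hqtdef, hrtdef]
    linear_combination -h1
  -- σ facts
  have hCSP : ∀ x : S × A, (∑ s', P x.1 x.2 s' * v s') ^ 2
      ≤ ∑ s', P x.1 x.2 s' * v s' ^ 2 := by
    intro x
    have h := Finset.sum_mul_sq_le_sq_mul_sq Finset.univ
      (fun s' => Real.sqrt (P x.1 x.2 s')) (fun s' => Real.sqrt (P x.1 x.2 s') * v s')
    have e1 : ∀ s' ∈ Finset.univ, Real.sqrt (P x.1 x.2 s') *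
        (Real.sqrt (P x.1 x.2 s') * v s') = P x.1 x.2 s' * v s' := by
      intro s' _; rw [← mul_assoc, Real.mul_self_sqrt (hP0 _ _ _)]
    have e2 : ∀ s' ∈ Finset.univ, Real.sqrt (P x.1 x.2 s') ^ 2 = P x.1 x.2 s' := by
      intro s' _; exact Real.sq_sqrt (hP0 _ _ _)
    have e3 : ∀ s' ∈ Finset.univ, (Real.sqrt (P x.1 x.2 s') * v s') ^ 2
        = P x.1 x.2 s' * v s' ^ 2 := by
      intro s' _; rw [mul_pow, Real.sq_sqrt (hP0 _ _ _)]
    rw [Finset.sum_congr rfl e1, Finset.sum_congr rfl e2, Finset.sum_congr rfl e3, hP1,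
      one_mul] at h
    exact h
  have hσ0 : ∀ x, 0 ≤ σ x := fun x => by rw [hσ x]; exact Real.sqrt_nonneg _
  have hσsq : ∀ x, σ x ^ 2 = γ ^ 2 * ((∑ s', P x.1 x.2 s' * v s' ^ 2)
      - (∑ s', P x.1 x.2 s' * v s') ^ 2) := by
    intro x
    rw [hσ x, Real.sq_sqrt (mul_nonneg (sq_nonneg γ) (by linarith [hCSP x]))]
  have hshift : ∀ x, σ x ^ 2 = γ ^ 2 * ((Pmat.mulVec (fun y => qt y ^ 2)) x
      - ((Pmat.mulVec qt) x) ^ 2) := by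
    intro x
    rw [hσsq x, hPqt2 x, hPqt x]
    have e : ∑ s', P x.1 x.2 s' * (v s' - c) ^ 2
        = (∑ s', P x.1 x.2 s' * v s' ^ 2) - 2 * c * (∑ s', P x.1 x.2 s' * v s') + c ^ 2 := by
      have e1 : ∀ s' ∈ Finset.univ, P x.1 x.2 s' * (v s' - c) ^ 2
          = P x.1 x.2 s' * v s' ^ 2 - 2 * c * (P x.1 x.2 s' * v s') + c ^ 2 * P x.1 x.2 s' := by
        intro s' _; ring
      rw [Finset.sum_congr rfl e1, Finset.sum_add_distrib, Finset.sum_sub_distrib,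
        ← Finset.mul_sum, ← Finset.mul_sum, hP1]
      ring
    rw [e]
    ring
  clear_value v Q rπ c qt rt S0 K B
  -- supersolution h
  set hh : S × A → ℝ := fun x => K - γ * qt x ^ 2 with hhdef
  clear_value hh
  have hsup : ∀ x, σ x ^ 2 ≤ (B.mulVec hh) x := by
    intro x
    have hPh : (Pmat.mulVec hh) x = K - γ * (Pmat.mulVec (fun y => qt y ^ 2)) x := by
      rw [hPapp, hPapp]
      have e : ∀ s' ∈ Finset.univ, P x.1 x.2 s' * hh (s', π s')
          = P x.1 x.2 s' * K - γ * (P x.1 x.2 s' * qt (s', π s') ^ 2) := by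
        intro s' _; simp only [hhdef]; ring
      rw [Finset.sum_congr rfl e, Finset.sum_sub_distrib, ← Finset.sum_mul, hP1, one_mul,
        ← Finset.mul_sum]
    have hK2 : (1 - γ) * K = 2 * S0 := by
      rw [hKdef, mul_comm, div_mul_cancel₀ _ (ne_of_gt hγd)]
    have hb : γ * Pmat.mulVec qt x = qt x - rt x := hqtB x
    have hkey : γ * qt x ^ 2 - (qt x - rt x) ^ 2 ≤ 2 * S0 :=
      MDPaux.key_ineq (qt x) (rt x) S0 γ (hqt0 x) (hqtS x) (hrt1 x).1 (hrt1 x).2 hγ1.le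
    have hBh : B.mulVec hh x = (1 - γ) * K - γ * qt x ^ 2
        + γ ^ 2 * Pmat.mulVec (fun y => qt y ^ 2) x := by
      rw [hBapp, hPh]
      simp only [hhdef]
      ring
    have hσx : σ x ^ 2 = γ ^ 2 * Pmat.mulVec (fun y => qt y ^ 2) x - (qt x - rt x) ^ 2 := by
      rw [hshift x]
      linear_combination (-(γ * Pmat.mulVec qt x + (qt x - rt x))) * hb
    rw [hσx, hBh]
    linarith [hkey, hK2]
  -- w = B⁻¹ σ²
  set w : S × A → ℝ := B⁻¹.mulVec (fun x => σ x ^ 2) with hwdef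
  have hwB : B.mulVec w = fun x => σ x ^ 2 := hBBinv _
  have hwK : ∀ x, w x ≤ K := by
    have hpos : ∀ x, 0 ≤ (hh - w) x := by
      refine hnonneg _ (fun x => ?_)
      rw [Matrix.mulVec_sub]
      have := hsup x
      have e : B.mulVec w x = σ x ^ 2 := congrFun hwB x
      simp only [Pi.sub_apply]
      linarith
    intro x
    have h1 := hpos x
    have h2 : γ * qt x ^ 2 ≥ 0 := mul_nonneg hγ0.le (sq_nonneg _)
    simp only [Pi.sub_apply, hhdef] at h1
    linarith
  -- u = B⁻¹ σ and Cauchy–Schwarz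
  set u : S × A → ℝ := B⁻¹.mulVec σ with hudef
  have hu0 : ∀ x, 0 ≤ u x := hinvnn σ hσ0
  have hCS : ∀ x, u x ^ 2 ≤ (1 / (1 - γ)) * w x := by
    intro x
    have h := Finset.sum_mul_sq_le_sq_mul_sq Finset.univ
      (fun y => Real.sqrt (B⁻¹ x y)) (fun y => Real.sqrt (B⁻¹ x y) * σ y)
    have e1 : ∀ y ∈ Finset.univ, Real.sqrt (B⁻¹ x y) * (Real.sqrt (B⁻¹ x y) * σ y)
        = B⁻¹ x y * σ y := by
      intro y _; rw [← mul_assoc, Real.mul_self_sqrt (hD0 x y)]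
    have e2 : ∀ y ∈ Finset.univ, Real.sqrt (B⁻¹ x y) ^ 2 = B⁻¹ x y := by
      intro y _; exact Real.sq_sqrt (hD0 x y)
    have e3 : ∀ y ∈ Finset.univ, (Real.sqrt (B⁻¹ x y) * σ y) ^ 2 = B⁻¹ x y * σ y ^ 2 := by
      intro y _; rw [mul_pow, Real.sq_sqrt (hD0 x y)]
    rw [Finset.sum_congr rfl e1, Finset.sum_congr rfl e2, Finset.sum_congr rfl e3,
      hDrow x] at h
    have eu : u x = ∑ y, B⁻¹ x y * σ y := by
      simp [hudef, Matrix.mulVec, dotProduct]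
    have ew : w x = ∑ y, B⁻¹ x y * σ y ^ 2 := by
      simp [hwdef, Matrix.mulVec, dotProduct]
    rw [eu, ew]
    exact h
  -- finish
  have hRHS0 : 0 ≤ 80 * Real.sqrt ((m : ℝ) / p) / (1 - γ) := by positivity
  have hfin : ∀ x, u x ≤ 80 * Real.sqrt ((m : ℝ) / p) / (1 - γ) := by
    intro x
    have h1 : u x ^ 2 ≤ (80 * Real.sqrt ((m : ℝ) / p) / (1 - γ)) ^ 2 := by
      have h2 : u x ^ 2 ≤ (1 / (1 - γ)) * K := le_trans (hCS x)
        (mul_le_mul_of_nonneg_left (hwK x) (by positivity))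
      have h3 : (1 / (1 - γ)) * K = 2 * S0 / (1 - γ) ^ 2 := by
        rw [hKdef, div_mul_div_comm, one_mul, ← sq]
      have h4 : (80 * Real.sqrt ((m : ℝ) / p) / (1 - γ)) ^ 2
          = 6400 * ((m : ℝ) / p) / (1 - γ) ^ 2 := by
        rw [div_pow, mul_pow, Real.sq_sqrt (by positivity : (0:ℝ) ≤ (m : ℝ) / p)]
        norm_num
      rw [h4]
      rw [h3] at h2
      refine le_trans h2 ?_
      have h5 : 2 * S0 ≤ 6400 * ((m : ℝ) / p) := by rw [hS0def]; linarith [hmp1]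
      exact (div_le_div_iff_of_pos_right (by positivity)).mpr h5
    calc u x = Real.sqrt (u x ^ 2) := (Real.sqrt_sq (hu0 x)).symm
      _ ≤ Real.sqrt ((80 * Real.sqrt ((m : ℝ) / p) / (1 - γ)) ^ 2) := Real.sqrt_le_sqrt h1
      _ = 80 * Real.sqrt ((m : ℝ) / p) / (1 - γ) := Real.sqrt_sq hRHS0
  refine ciSup_le fun x => ?_
  rw [abs_of_nonneg (hu0 x)]
  exact hfin x
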